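/- For any n ≥ 3 and any finite-valued random variables X₁, …, Xₙ on a common probability space, DTC(X₁;…;Xₙ) = DTC(X₁;…;X_{n−1}) + ∑_{i=1}^{n−1} I(Xᵢ ; Xₙ | X_{[n−1]∖i}). -/

import Mathlib

open MeasureTheory Real

namespace Corr

variable {Ω : Type*} [MeasurableSpace Ω]

/-- Shannon entropy of a finite-valued random variable. -/
noncomputable def shEnt {K : Type*} [Fintype K] (μ : Measure Ω) (X : Ω → K) : ℝ :=
  ∑ k : K, Real.negMulLog ((μ (X ⁻¹' {k})).toReal)

/-- Conditional Shannon entropy `H(X | Y)`. -/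
noncomputable def condEnt {K L : Type*} [Fintype K] [Fintype L]
    (μ : Measure Ω) (X : Ω → K) (Y : Ω → L) : ℝ :=
  shEnt μ (fun ω => (X ω, Y ω)) - shEnt μ Y

/-- Mutual information `I(X ; Y)`. -/
noncomputable def mutInfo {K L : Type*} [Fintype K] [Fintype L]
    (μ : Measure Ω) (X : Ω → K) (Y : Ω → L) : ℝ :=
  shEnt μ X + shEnt μ Y - shEnt μ (fun ω => (X ω, Y ω))

/-- Conditional mutual information `I(X ; Y | Z)`. -/
noncomputable def condMutInfo {K L M : Type*} [Fintype K] [Fintype L] [Fintype M]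
    (μ : Measure Ω) (X : Ω → K) (Y : Ω → L) (Z : Ω → M) : ℝ :=
  condEnt μ X Z + condEnt μ Y Z - condEnt μ (fun ω => (X ω, Y ω)) Z

/-- The joint random variable of a family of random variables. -/
def joint {ι : Type*} {K : ι → Type*} (X : ∀ i, Ω → K i) : Ω → ∀ i, K i :=
  fun ω i => X i ω

/-- Total correlation `TC(X₁;…;Xₙ)`. -/
noncomputable def TC {ι : Type*} [Fintype ι] [DecidableEq ι] {K : ι → Type*}
    [∀ i, Fintype (K i)] (μ : Measure Ω) (X : ∀ i, Ω → K i) : ℝ :=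
  (∑ i, shEnt μ (X i)) - shEnt μ (joint X)

/-- Dual total correlation `DTC(X₁;…;Xₙ)`. -/
noncomputable def DTC {ι : Type*} [Fintype ι] [DecidableEq ι] {K : ι → Type*}
    [∀ i, Fintype (K i)] (μ : Measure Ω) (X : ∀ i, Ω → K i) : ℝ :=
  shEnt μ (joint X) - ∑ i, condEnt μ (X i) (joint fun j : {j : ι // j ≠ i} => X j.1)

/-- Conditional total correlation `TC(X₁;…;Xₙ | Y)`. -/
noncomputable def condTC {ι : Type*} [Fintype ι] [DecidableEq ι] {K : ι → Type*}
    [∀ i, Fintype (K i)] {L : Type*} [Fintype L]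
    (μ : Measure Ω) (X : ∀ i, Ω → K i) (Y : Ω → L) : ℝ :=
  (∑ i, condEnt μ (X i) Y) - condEnt μ (joint X) Y

/-- Conditional dual total correlation `DTC(X₁;…;Xₙ | Y)`. -/
noncomputable def condDTC {ι : Type*} [Fintype ι] [DecidableEq ι] {K : ι → Type*}
    [∀ i, Fintype (K i)] {L : Type*} [Fintype L]
    (μ : Measure Ω) (X : ∀ i, Ω → K i) (Y : Ω → L) : ℝ :=
  condEnt μ (joint X) Y -
    ∑ i, condEnt μ (X i)
      (fun ω => (joint (fun j : {j : ι // j ≠ i} => X j.1) ω, Y ω))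

/-- For `n ≥ 3` and finite-valued random variables `X₁, …, Xₙ`,
`DTC(X₁;…;Xₙ) = DTC(X₁;…;X_{n−1}) + ∑_{i=1}^{n−1} I(Xᵢ ; Xₙ | X_{[n−1]∖i})`. -/

lemma shEnt_comp {K L : Type*} [Fintype K] [Fintype L] (μ : Measure Ω)
    (X : Ω → K) (f : K → L) (hf : Function.Injective f) :
    shEnt μ (fun ω => f (X ω)) = shEnt μ X := by
  classical
  unfold shEnt
  rw [← Finset.sum_subset (Finset.subset_univ (Finset.univ.image f))]
  · rw [Finset.sum_image (fun x _ y _ h => hf h)]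
    refine Finset.sum_congr rfl fun k _ => ?_
    have h0 : (fun ω => f (X ω)) ⁻¹' {f k} = X ⁻¹' {k} := by
      ext ω; simp [hf.eq_iff]
    rw [h0]
  · intro l _ hl
    have h0 : (fun ω => f (X ω)) ⁻¹' {l} = ∅ := by
      ext ω
      simp only [Set.mem_preimage, Set.mem_singleton_iff, Set.mem_empty_iff_false, iff_false]
      intro h
      exact hl (Finset.mem_image.2 ⟨X ω, Finset.mem_univ _, h⟩)
    simp [h0]

lemma sum_split {n : ℕ} (hn : 1 ≤ n) (f : Fin n → ℝ) :
    ∑ i, f i = f ⟨n - 1, by omega⟩ + ∑ i : {j : Fin n // j.1 < n - 1}, f i.1 := by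
  classical
  rw [← Finset.sum_filter_add_sum_filter_not Finset.univ (fun i : Fin n => i.1 < n - 1)]
  rw [add_comm]
  congr 1
  · have h1 : Finset.univ.filter (fun i : Fin n => ¬ i.1 < n - 1) = {⟨n - 1, by omega⟩} := by
      ext i
      have := i.isLt
      simp only [Finset.mem_filter, Finset.mem_univ, true_and, Finset.mem_singleton, Fin.ext_iff]
      omega
    rw [h1, Finset.sum_singleton]
  · exact Finset.sum_subtype _ (by simp) f

theorem dtc_recursion (μ : Measure Ω) [IsProbabilityMeasure μ]
    {n : ℕ} (hn : 3 ≤ n) {K : Fin n → Type*} [∀ i, Fintype (K i)]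
    [∀ i, MeasurableSpace (K i)] [∀ i, MeasurableSingletonClass (K i)]
    (X : ∀ i, Ω → K i) (hX : ∀ i, Measurable (X i)) :
    DTC μ X = DTC μ (fun j : {j : Fin n // j.1 < n - 1} => X j.1)
      + ∑ i : {j : Fin n // j.1 < n - 1},
          condMutInfo μ (X i.1) (X ⟨n - 1, by omega⟩)
            (joint fun j : {j : {j : Fin n // j.1 < n - 1} // j ≠ i} => X j.1.1) := by
  classical
  have hn1 : n - 1 < n := by omega
  set s : Fin n := ⟨n - 1, hn1⟩ with hs
  have hne : ∀ j : {j : Fin n // j.1 < n - 1}, (j.1 : Fin n) ≠ s := by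
    intro j e
    have h2 := j.2
    rw [e] at h2
    exact absurd h2 (lt_irrefl _)
  have hse : ∀ i : {j : Fin n // j.1 < n - 1}, s ≠ (i.1 : Fin n) := by
    intro i e
    have h2 := i.2
    rw [← e] at h2
    exact absurd h2 (lt_irrefl _)
  have e1 : shEnt μ (fun ω => (X s ω, joint (fun j : {j : Fin n // j ≠ s} => X j.1) ω))
      = shEnt μ (joint X) := by
    refine shEnt_comp μ (joint X)
      (fun a => (a s, fun j : {j : Fin n // j ≠ s} => a j.1)) ?_
    intro a b h
    funext i
    by_cases hi : i = s
    · subst hi; exact congrArg Prod.fst h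
    · exact congrFun (congrArg Prod.snd h) ⟨i, hi⟩
  have e2 : shEnt μ (joint fun j : {j : Fin n // j ≠ s} => X j.1)
      = shEnt μ (joint fun j : {j : Fin n // j.1 < n - 1} => X j.1) := by
    refine (shEnt_comp μ (joint fun j : {j : Fin n // j ≠ s} => X j.1)
      (fun a => fun j : {j : Fin n // j.1 < n - 1} => a ⟨j.1, hne j⟩) ?_).symm
    intro a b h
    funext j
    have hj : j.1.val < n - 1 := by
      have h1 := j.1.isLt
      have h2 : j.1.val ≠ n - 1 := fun e => j.2 (Fin.ext e)
      omega
    exact congrFun h ⟨j.1, hj⟩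
  have e3 : ∀ i : {j : Fin n // j.1 < n - 1},
      shEnt μ (fun ω => (X i.1 ω, joint (fun j : {j : Fin n // j ≠ (i.1 : Fin n)} => X j.1) ω))
      = shEnt μ (joint X) := by
    intro i
    refine shEnt_comp μ (joint X)
      (fun a => (a i.1, fun j : {j : Fin n // j ≠ (i.1 : Fin n)} => a j.1)) ?_
    intro a b h
    funext k
    by_cases hk : k = (i.1 : Fin n)
    · subst hk; exact congrArg Prod.fst h
    · exact congrFun (congrArg Prod.snd h) ⟨k, hk⟩
  have e4 : ∀ i : {j : Fin n // j.1 < n - 1},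
      shEnt μ (joint fun j : {j : Fin n // j ≠ (i.1 : Fin n)} => X j.1)
      = shEnt μ (fun ω => (X s ω,
          joint (fun j : {j : {j : Fin n // j.1 < n - 1} // j ≠ i} => X j.1.1) ω)) := by
    intro i
    refine (shEnt_comp μ (joint fun j : {j : Fin n // j ≠ (i.1 : Fin n)} => X j.1)
      (fun a => (a ⟨s, hse i⟩,
        fun j : {j : {j : Fin n // j.1 < n - 1} // j ≠ i} =>
          a ⟨j.1.1, fun e => j.2 (Subtype.ext e)⟩)) ?_).symm
    intro a b h
    funext j
    by_cases hjs : j.1 = s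
    · rw [show j = ⟨s, hse i⟩ from Subtype.ext hjs]
      exact congrArg Prod.fst h
    · have hj : j.1.val < n - 1 := by
        have h1 := j.1.isLt
        have h2 : j.1.val ≠ n - 1 := fun e => hjs (Fin.ext e)
        omega
      exact congrFun (congrArg Prod.snd h)
        ⟨⟨j.1, hj⟩, fun e => j.2 (congrArg Subtype.val e)⟩
  have e5 : ∀ i : {j : Fin n // j.1 < n - 1},
      shEnt μ (fun ω => ((X i.1 ω, X s ω),
          joint (fun j : {j : {j : Fin n // j.1 < n - 1} // j ≠ i} => X j.1.1) ω))
      = shEnt μ (joint X) := by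
    intro i
    refine shEnt_comp μ (joint X)
      (fun a => ((a i.1, a s),
        fun j : {j : {j : Fin n // j.1 < n - 1} // j ≠ i} => a j.1.1)) ?_
    intro a b h
    funext k
    by_cases hk1 : k = (i.1 : Fin n)
    · subst hk1; exact congrArg Prod.fst (congrArg Prod.fst h)
    · by_cases hk2 : k = s
      · subst hk2; exact congrArg Prod.snd (congrArg Prod.fst h)
      · have hk : k.val < n - 1 := by
          have h1 := k.isLt
          have h2 : k.val ≠ n - 1 := fun e => hk2 (Fin.ext e)
          omega
        exact congrFun (congrArg Prod.snd h)
          ⟨⟨k, hk⟩, fun e => hk1 (congrArg Subtype.val e)⟩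
  simp only [DTC, condEnt, condMutInfo]
  rw [sum_split (show 1 ≤ n by omega)]
  rw [← hs]
  simp only [e1, e2, e3, e4, e5]
  simp only [Finset.sum_sub_distrib, Finset.sum_add_distrib, Finset.sum_const, nsmul_eq_mul]
  rw [Finset.sum_congr rfl fun i _ => e5 i, Finset.sum_congr rfl fun i _ => (e4 i).symm]
  simp only [Finset.sum_const, nsmul_eq_mul]
  ring


end Corr
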